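/- arXiv:1102.4811 — 4 statements merged into one kernel-verified Lean document; each statement's English description precedes it below -/
import Mathlib

section
/- Let μ be a probability measure on ℝ with cumulative distribution function F, and let p_c ∈ (0,1). Define m⁺ = inf{x ∈ ℝ : F(x) ≥ 1 − p_c} and m⁻ = sup{x ∈ ℝ : F(x) ≤ 1 − p_c}, and assume m⁺ = m⁻ =: m and that either F has a jump at m (i.e. F(m) > lim_{h→0⁺} F(m − h)) or F is differentiable at m with F′(m) > 0. Then for every σ > 0, setting τ = σ·m + 1/2, one has 1 − F((τ − 1)/σ) > p_c and 1 − F(τ/σ) < p_c. -/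
open MeasureTheory

/-- **Choice of threshold under the non-degeneracy condition.**
Let `μ` be a probability measure on `ℝ` with cdf `F`, and `p_c ∈ (0,1)`.
If `m⁺ = inf {x : F x ≥ 1 − p_c}` and `m⁻ = sup {x : F x ≤ 1 − p_c}` agree, with
common value `m`, and `F` either has a jump at `m` (its left limit at `m` is
strictly below `F m`) or is differentiable at `m` with positive derivative, then
for every `σ > 0`, taking `τ = σ·m + 1/2`, one has
`1 − F((τ−1)/σ) > p_c` and `1 − F(τ/σ) < p_c`. -/
theorem threshold_choice
    (μ : Measure ℝ) [IsProbabilityMeasure μ] (pc : ℝ) (hpc0 : 0 < pc) (hpc1 : pc < 1)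
    (F : ℝ → ℝ) (hF : ∀ x, F x = (μ (Set.Iic x)).toReal)
    (m : ℝ)
    (hplus : sInf {x : ℝ | 1 - pc ≤ F x} = m)
    (hminus : sSup {x : ℝ | F x ≤ 1 - pc} = m)
    (hnondeg : Function.leftLim F m < F m ∨ ∃ d : ℝ, HasDerivAt F d m ∧ 0 < d) :
    ∀ σ : ℝ, 0 < σ →
      pc < 1 - F ((σ * m + 1/2 - 1) / σ) ∧ 1 - F ((σ * m + 1/2) / σ) < pc := by
  have hFeq : F = ProbabilityTheory.cdf μ := by
    funext x; rw [hF, ProbabilityTheory.cdf_eq_real, measureReal_def]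
  have hFmono : Monotone F := hFeq ▸ (ProbabilityTheory.cdf μ).mono
  have htop : Filter.Tendsto F Filter.atTop (nhds 1) :=
    hFeq ▸ ProbabilityTheory.tendsto_cdf_atTop μ
  have hbot : Filter.Tendsto F Filter.atBot (nhds 0) :=
    hFeq ▸ ProbabilityTheory.tendsto_cdf_atBot μ
  -- exists x0 with F x0 > 1 - pc
  obtain ⟨x0, hx0⟩ : ∃ x0, 1 - pc < F x0 :=
    (htop.eventually (eventually_gt_nhds (by linarith))).exists
  obtain ⟨x1, hx1⟩ : ∃ x1, F x1 < 1 - pc :=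
    (hbot.eventually (eventually_lt_nhds (by linarith))).exists
  have hbddA : BddAbove {x : ℝ | F x ≤ 1 - pc} := by
    refine ⟨x0, fun y hy => ?_⟩
    by_contra h
    exact absurd (hFmono (le_of_not_ge h)) (by simp only [Set.mem_setOf_eq] at hy; linarith)
  have hbddB : BddBelow {x : ℝ | 1 - pc ≤ F x} := by
    refine ⟨x1, fun y hy => ?_⟩
    by_contra h
    exact absurd (hFmono (le_of_not_ge h)) (by simp only [Set.mem_setOf_eq] at hy; linarith)
  -- for y > m, F y > 1 - pc ; for y < m, F y < 1 - pc
  have hgt : ∀ y, m < y → 1 - pc < F y := by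
    intro y hy
    by_contra h
    have : y ≤ m := hminus ▸ le_csSup hbddA (le_of_not_gt h)
    linarith
  have hlt : ∀ y, y < m → F y < 1 - pc := by
    intro y hy
    by_contra h
    have : m ≤ y := hplus ▸ csInf_le hbddB (le_of_not_gt h)
    linarith
  intro σ hσ
  have h1 : (σ * m + 1/2 - 1) / σ < m := by
    rw [div_lt_iff₀ hσ]; nlinarith
  have h2 : m < (σ * m + 1/2) / σ := by
    rw [lt_div_iff₀ hσ]; nlinarith
  exact ⟨by linarith [hlt _ h1], by linarith [hgt _ h2]⟩
end

section
/- Let ι be a finite type and p : ι → ℝ with 0 ≤ p i ≤ 1 for all i, and let μ be the product probability measure on configurations ω : ι → Bool under which the coordinates are independent with μ(ω i = true) = p i. If A and B are measurable increasing events (upper sets for the pointwise order), then μ(A ∩ B) ≥ μ(A) · μ(B). The same inequality holds if A and B are both decreasing events. -/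
open MeasureTheory

noncomputable def bernoulliBool (p : ℝ) : Measure Bool :=
  (PMF.bernoulli (min (Real.toNNReal p) 1) (min_le_right _ _)).toMeasure

instance (p : ℝ) : IsProbabilityMeasure (bernoulliBool p) :=
  PMF.toMeasure.isProbabilityMeasure _

/-- Inhomogeneous Bernoulli site percolation: the product probability measure on
configurations `ω : V → Bool` under which the coordinates are independent and
`ω s = true` with probability `π s` (when `0 ≤ π s ≤ 1`). -/
noncomputable def sitePerc {V : Type*} [Fintype V] (π : V → ℝ) :
    Measure (V → Bool) :=
  Measure.pi fun s => bernoulliBool (π s)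

/-- **The FKG inequality for Bernoulli product measures.**
Let `ι` be a finite type, `p : ι → ℝ` with `0 ≤ p i ≤ 1`, and let `μ` be the product
probability measure on `ι → Bool` with independent coordinates and
`μ(ω i = true) = p i`. If `A` and `B` are measurable events which are both increasing
(upper sets for the pointwise order), or both decreasing (lower sets), then
`μ(A ∩ B) ≥ μ(A) · μ(B)`. -/
theorem fkg_inequality {ι : Type*} [Fintype ι]
    (p : ι → ℝ) (hp0 : ∀ i, 0 ≤ p i) (hp1 : ∀ i, p i ≤ 1)
    (A B : Set (ι → Bool)) (hA : MeasurableSet A) (hB : MeasurableSet B)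
    (hmono : (IsUpperSet A ∧ IsUpperSet B) ∨ (IsLowerSet A ∧ IsLowerSet B)) :
    sitePerc p A * sitePerc p B ≤ sitePerc p (A ∩ B) := by
  classical
  set w : (ι → Bool) → ℝ := fun ω => ∏ i, (if ω i then p i else 1 - p i) with hw_def
  have hwi : ∀ (ω : ι → Bool) i, 0 ≤ (if ω i then p i else 1 - p i) := by
    intro ω i
    by_cases h : ω i <;> simp [h, hp0 i, sub_nonneg.2 (hp1 i)]
  have hw : ∀ ω, 0 ≤ w ω := fun ω => Finset.prod_nonneg fun i _ => hwi ω i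
  have hsingle : ∀ ω : ι → Bool, sitePerc p {ω} = ENNReal.ofReal (w ω) := by
    intro ω
    rw [sitePerc, ← Set.univ_pi_singleton ω, Measure.pi_pi]
    rw [show w ω = ∏ i, (if ω i then p i else 1 - p i) from rfl,
      ENNReal.ofReal_prod_of_nonneg (fun i _ => hwi ω i)]
    refine Finset.prod_congr rfl fun i _ => ?_
    rw [bernoulliBool, PMF.toMeasure_apply_singleton _ _ (measurableSet_singleton _),
      PMF.bernoulli_apply]
    have hmin : min (Real.toNNReal (p i)) 1 = Real.toNNReal (p i) :=
      min_eq_left (by simpa using hp1 i)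
    rw [hmin]
    cases h : ω i with
    | true => simp [ENNReal.ofReal]
    | false =>
      simp only [cond_false, Bool.false_eq_true, if_false]
      rw [ENNReal.ofReal_sub _ (hp0 i), ENNReal.ofReal_one, ENNReal.coe_sub, ENNReal.coe_one]
      rfl
  have hmeas : ∀ S : Set (ι → Bool),
      sitePerc p S = ENNReal.ofReal (∑ ω ∈ Finset.univ.filter (· ∈ S), w ω) := by
    intro S
    have h : S = ⋃ ω ∈ Finset.univ.filter (· ∈ S), ({ω} : Set (ι → Bool)) := by ext x; simp
    conv_lhs => rw [h]
    rw [measure_biUnion_finset ?_ fun b _ => measurableSet_singleton b]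
    · rw [ENNReal.ofReal_sum_of_nonneg fun ω _ => hw ω]
      exact Finset.sum_congr rfl fun ω _ => hsingle ω
    · intro x _ y _ hxy; simp [Set.disjoint_singleton, hxy]
  have hprob : IsProbabilityMeasure (sitePerc p) := by
    unfold sitePerc; infer_instance
  have htot : ∑ ω, w ω = 1 := by
    have h1 := hmeas Set.univ
    rw [measure_univ] at h1
    simp only [Set.mem_univ, Finset.filter_true] at h1
    have := congrArg ENNReal.toReal h1
    rwa [ENNReal.toReal_ofReal (Finset.sum_nonneg fun ω _ => hw ω), ENNReal.toReal_one,
      eq_comm] at this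
  have hlog : ∀ a b : ι → Bool, w a * w b = w (a ⊓ b) * w (a ⊔ b) := by
    intro a b
    show (∏ i, (if a i then p i else 1 - p i)) * (∏ i, (if b i then p i else 1 - p i)) =
      (∏ i, (if (a ⊓ b) i then p i else 1 - p i)) * (∏ i, (if (a ⊔ b) i then p i else 1 - p i))
    rw [← Finset.prod_mul_distrib, ← Finset.prod_mul_distrib]
    refine Finset.prod_congr rfl fun i _ => ?_
    rw [Pi.inf_apply, Pi.sup_apply]
    cases a i <;> cases b i <;> simp [min_def, max_def] <;> ring
  have hsum : ∀ (S : Set (ι → Bool)),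
      ∑ ω, w ω * (if ω ∈ S then (1:ℝ) else 0) = ∑ ω ∈ Finset.univ.filter (· ∈ S), w ω := by
    intro S
    rw [Finset.sum_filter]
    exact Finset.sum_congr rfl fun ω _ => by by_cases h : ω ∈ S <;> simp [h]
  set f : (ι → Bool) → ℝ := fun ω => if ω ∈ A then (1:ℝ) else 0 with hf_def
  set g : (ι → Bool) → ℝ := fun ω => if ω ∈ B then (1:ℝ) else 0 with hg_def
  have hf0 : (0:(ι → Bool) → ℝ) ≤ f := fun ω => by positivity
  have hg0 : (0:(ι → Bool) → ℝ) ≤ g := fun ω => by positivity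
  have hfg : ∀ ω, f ω * g ω = if ω ∈ A ∩ B then (1:ℝ) else 0 := by
    intro ω
    by_cases h1 : ω ∈ A <;> by_cases h2 : ω ∈ B <;> simp [hf_def, hg_def, h1, h2]
  -- the key real-valued inequality
  have key : (∑ ω, w ω * f ω) * (∑ ω, w ω * g ω) ≤ ∑ ω, w ω * (f ω * g ω) := by
    obtain ⟨hA', hB'⟩ | ⟨hA', hB'⟩ := hmono
    · have hf : Monotone f := by
        intro x y hxy
        by_cases hx : x ∈ A
        · simp [hf_def, hx, hA' hxy hx]
        · simp only [hf_def, hx, if_false]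
          positivity
      have hg : Monotone g := by
        intro x y hxy
        by_cases hx : x ∈ B
        · simp [hg_def, hx, hB' hxy hx]
        · simp only [hg_def, hx, if_false]
          positivity
      have := fkg (μ := w) (f := f) (g := g) (fun ω => hw ω) hf0 hg0 hf hg
        (fun a b => le_of_eq (hlog a b))
      rwa [htot, one_mul] at this
    · have hf : Monotone (fun a : (ι → Bool)ᵒᵈ => f (OrderDual.ofDual a)) := by
        intro x y hxy
        have hxy' : OrderDual.ofDual y ≤ OrderDual.ofDual x := hxy
        by_cases hx : OrderDual.ofDual x ∈ A
        · simp [hf_def, hx, hA' hxy' hx]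
        · simp only [hf_def, hx, if_false]
          positivity
      have hg : Monotone (fun a : (ι → Bool)ᵒᵈ => g (OrderDual.ofDual a)) := by
        intro x y hxy
        have hxy' : OrderDual.ofDual y ≤ OrderDual.ofDual x := hxy
        by_cases hx : OrderDual.ofDual x ∈ B
        · simp [hg_def, hx, hB' hxy' hx]
        · simp only [hg_def, hx, if_false]
          positivity
      have := fkg (μ := fun a : (ι → Bool)ᵒᵈ => w (OrderDual.ofDual a))
        (f := fun a => f (OrderDual.ofDual a)) (g := fun a => g (OrderDual.ofDual a))
        (fun ω => hw _) (fun ω => hf0 _) (fun ω => hg0 _) hf hg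
        (fun a b => le_of_eq ((hlog (OrderDual.ofDual a) (OrderDual.ofDual b)).trans
          (mul_comm _ _)))
      have e1 : ∀ (h : (ι → Bool)ᵒᵈ → ℝ),
          ∑ a : (ι → Bool)ᵒᵈ, h a = ∑ a : ι → Bool, h (OrderDual.toDual a) :=
        fun h => Fintype.sum_equiv OrderDual.toDual _ _ (fun _ => rfl)
      rw [e1, e1, e1] at this
      simp only [OrderDual.ofDual_toDual] at this
      rwa [htot, one_mul] at this
  rw [hmeas A, hmeas B, hmeas (A ∩ B),
    ← ENNReal.ofReal_mul (Finset.sum_nonneg fun ω _ => hw ω)]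
  apply ENNReal.ofReal_le_ofReal
  rw [← hsum A, ← hsum B, ← hsum (A ∩ B)]
  exact key.trans (le_of_eq (Finset.sum_congr rfl fun ω _ => by rw [hfg ω]; congr))
end

section
/- Fix p_B ∈ (1/2, 1] and K₀ > 0, and suppose there is D > 0 such that for every n ≥ 1, Bernoulli site percolation with parameter p_B on T^(n) contains a left-right crossing with probability at least 1 − n·exp(−D·n). For each N ≥ 2, let π_N : V_N → [0,1] (V_N the vertex set of T^(N)) be site probabilities and μ_{π_N} the associated inhomogeneous site percolation measure, and suppose there is a square sub-box Q_N ⊆ V_N, a translate of the box {0,…,ρ(N)−1} × {0,…,ρ(N)−1}, with π_N(s) = p_B for all s ∈ Q_N, where ρ(N) ≥ K₀·log N. Then μ_{π_N}({ω : the maximal occupied cluster size T(ω) satisfies T(ω) ≥ K₀·log N}) tends to 1 as N → ∞; equivalently, the type II error β(N) of the maximum cluster test tends to 0. -/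
open MeasureTheory

/-- The subgraph of occupied sites. -/
def occGraph {V : Type*} (G : SimpleGraph V) (ω : V → Bool) : SimpleGraph V where
  Adj u v := G.Adj u v ∧ ω u = true ∧ ω v = true
  symm := ⟨fun _ _ h => ⟨h.1.symm, h.2.2, h.2.1⟩⟩
  loopless := ⟨fun v h => G.loopless.irrefl v h.1⟩

/-- The occupied cluster of a site `s`: all occupied sites joined to `s` by a
path of occupied sites (empty if `s` is not occupied). -/
def cluster {V : Type*} (G : SimpleGraph V) (ω : V → Bool) (s : V) : Set V :=
  {t | ω s = true ∧ ω t = true ∧ (occGraph G ω).Reachable s t}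

/-- The maximal occupied cluster size `T(ω) = max_s |C(s,ω)|`. -/
noncomputable def maxCluster {V : Type*} [Fintype V] (G : SimpleGraph V) (ω : V → Bool) : ℕ :=
  Finset.univ.sup fun s => (cluster G ω s).ncard

/-- The finite triangular lattice `T^(N)`: vertices are the points of the box
`{0,…,N−1} × {0,…,N−1} ⊆ ℤ × ℤ`, two distinct vertices `s`, `t` being adjacent iff
`t − s ∈ {(1,0),(−1,0),(0,1),(0,−1),(1,1),(−1,−1)}`. -/
def triLattice (N : ℕ) : SimpleGraph (Fin N × Fin N) where
  Adj s t := (((t.1 : ℤ) - (s.1 : ℤ), (t.2 : ℤ) - (s.2 : ℤ)) : ℤ × ℤ) ∈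
    ({(1,0), (-1,0), (0,1), (0,-1), (1,1), (-1,-1)} : Set (ℤ × ℤ))
  symm := by
    refine ⟨?_⟩
    intro s t h
    simp only [Set.mem_insert_iff, Set.mem_singleton_iff, Prod.mk.injEq] at h ⊢
    omega
  loopless := by
    refine ⟨?_⟩
    intro s h
    simp only [Set.mem_insert_iff, Set.mem_singleton_iff, Prod.mk.injEq, sub_self] at h
    omega

/-- A left-right crossing of `T^(N)` in a configuration `ω`: a finite sequence of
occupied sites `s₁, …, s_n` such that consecutive sites are adjacent, `s₁` has
first coordinate `0`, and `s_n` has first coordinate `N − 1`. -/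
def HasLeftRightCrossing (N : ℕ) (ω : Fin N × Fin N → Bool) : Prop :=
  ∃ (m : ℕ) (f : Fin (m + 1) → Fin N × Fin N),
    (∀ k, ω (f k) = true) ∧
    (∀ k : Fin m, (triLattice N).Adj (f k.castSucc) (f k.succ)) ∧
    ((f 0).1 : ℕ) = 0 ∧ ((f (Fin.last m)).1 : ℕ) = N - 1

instance {V : Type*} [Fintype V] (π : V → ℝ) : IsProbabilityMeasure (sitePerc π) := by
  unfold sitePerc; infer_instance

def embBox (N n a b : ℕ) (ha : a + n ≤ N) (hb : b + n ≤ N) (s : Fin n × Fin n) :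
    Fin N × Fin N :=
  (⟨a + s.1, by have := s.1.isLt; omega⟩, ⟨b + s.2, by have := s.2.isLt; omega⟩)

def boxEquiv (N n a b : ℕ) (ha : a + n ≤ N) (hb : b + n ≤ N) :
    (Fin n × Fin n) ≃
      {s : Fin N × Fin N // a ≤ (s.1 : ℕ) ∧ (s.1 : ℕ) < a + n ∧ b ≤ (s.2 : ℕ) ∧ (s.2 : ℕ) < b + n} where
  toFun j := ⟨embBox N n a b ha hb j, by
    have := j.1.isLt; have := j.2.isLt
    simp [embBox]⟩
  invFun s := (⟨(s.1.1 : ℕ) - a, by have := s.2; omega⟩, ⟨(s.1.2 : ℕ) - b, by have := s.2; omega⟩)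
  left_inv j := by
    ext
    · simp [embBox]
    · simp [embBox]
  right_inv s := by
    apply Subtype.ext
    have := s.2
    apply Prod.ext <;> apply Fin.ext <;> simp [embBox] <;> omega

lemma map_embBox (N n a b : ℕ) (ha : a + n ≤ N) (hb : b + n ≤ N)
    (π : Fin N × Fin N → ℝ) (pB : ℝ)
    (hπ : ∀ j : Fin n × Fin n, π (embBox N n a b ha hb j) = pB) :
    Measure.map (fun ω j => ω (embBox N n a b ha hb j)) (sitePerc π)
      = sitePerc (fun _ : Fin n × Fin n => pB) := by
  classical
  set p : Fin N × Fin N → Prop :=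
    fun s => a ≤ (s.1 : ℕ) ∧ (s.1 : ℕ) < a + n ∧ b ≤ (s.2 : ℕ) ∧ (s.2 : ℕ) < b + n with hp
  set e := boxEquiv N n a b ha hb
  have h1 := measurePreserving_piEquivPiSubtypeProd
    (fun s : Fin N × Fin N => bernoulliBool (π s)) p
  have h2 : MeasurePreserving (Prod.fst)
      ((Measure.pi fun i : Subtype p => bernoulliBool (π i)).prod
        (Measure.pi fun i : {i // ¬ p i} => bernoulliBool (π i)))
      (Measure.pi fun i : Subtype p => bernoulliBool (π i)) := by
    constructor
    · exact measurable_fst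
    · rw [Measure.map_fst_prod]
      simp
  have h3 := (measurePreserving_piCongrLeft
    (fun i : Subtype p => bernoulliBool (π (i : Fin N × Fin N))) e).symm
    (MeasurableEquiv.piCongrLeft (fun _ : Subtype p => Bool) e)
  have hcomp := h3.comp (h2.comp h1)
  have hfun : (fun ω (j : Fin n × Fin n) => ω (embBox N n a b ha hb j)) =
      (⇑(MeasurableEquiv.piCongrLeft (fun _ : Subtype p => Bool) e).symm ∘ Prod.fst ∘
        ⇑(MeasurableEquiv.piEquivPiSubtypeProd (fun _ : Fin N × Fin N => Bool) p)) := by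
    funext ω j
    simp [MeasurableEquiv.piEquivPiSubtypeProd, MeasurableEquiv.piCongrLeft,
      Equiv.piEquivPiSubtypeProd, e, boxEquiv, embBox]
  have hmeas : (Measure.pi fun j : Fin n × Fin n =>
      bernoulliBool (π ((e j : Fin N × Fin N)))) = sitePerc (fun _ : Fin n × Fin n => pB) := by
    unfold sitePerc
    congr 1
    funext j
    rw [show π ((e j : Fin N × Fin N)) = pB from hπ j]
  calc Measure.map (fun ω j => ω (embBox N n a b ha hb j)) (sitePerc π)
      = Measure.pi (fun j : Fin n × Fin n => bernoulliBool (π ((e j : Fin N × Fin N)))) := by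
        rw [hfun]; exact hcomp.map_eq
    _ = sitePerc (fun _ : Fin n × Fin n => pB) := hmeas

lemma discrete_ivt {m n : ℕ} (g : Fin (m + 1) → ℕ)
    (hstep : ∀ k : Fin m, ((g k.succ : ℤ) - g k.castSucc = 1 ∨ (g k.succ : ℤ) - g k.castSucc = 0
      ∨ (g k.succ : ℤ) - g k.castSucc = -1))
    (h0 : g 0 = 0) (hl : g (Fin.last m) = n - 1) {v : ℕ} (hv : v < n) :
    ∃ k, g k = v := by
  classical
  obtain ⟨k, hk, hmax⟩ := Finset.exists_max_image
    (Finset.univ.filter (fun k => g k ≤ v)) id ⟨0, by simp [h0]⟩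
  simp only [Finset.mem_filter, Finset.mem_univ, true_and] at hk
  by_cases hkl : k = Fin.last m
  · refine ⟨k, ?_⟩
    rw [hkl, hl]
    rw [hkl, hl] at hk
    omega
  · have hklt : (k : ℕ) < m := by
      rcases Fin.lt_or_eq_of_le (Fin.le_last k) with h | h
      · exact Nat.lt_of_lt_of_le h (by simp)
      · exact absurd h hkl
    set j : Fin m := ⟨k, hklt⟩ with hj
    have hkc : k = j.castSucc := by apply Fin.ext; simp [hj]
    have hnot : ¬ (g j.succ ≤ v) := by
      intro hle
      have := hmax j.succ (by simp [hle])
      simp only [id] at this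
      rw [hkc] at this
      have hlt : j.castSucc < j.succ := Fin.castSucc_lt_succ
      exact absurd this (not_le.mpr hlt)
    have := hstep j
    rw [← hkc] at this
    refine ⟨k, ?_⟩
    omega

lemma adj_fst {N : ℕ} {s t : Fin N × Fin N} (h : (triLattice N).Adj s t) :
    ((t.1 : ℤ) - (s.1 : ℤ) = 1 ∨ (t.1 : ℤ) - (s.1 : ℤ) = 0 ∨ (t.1 : ℤ) - (s.1 : ℤ) = -1) := by
  simp only [triLattice, Set.mem_insert_iff, Set.mem_singleton_iff, Prod.mk.injEq] at h
  omega

lemma cluster_of_crossing (N n a b : ℕ) (ha : a + n ≤ N) (hb : b + n ≤ N)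
    (ω : Fin N × Fin N → Bool)
    (h : HasLeftRightCrossing n (fun j => ω (embBox N n a b ha hb j))) :
    n ≤ maxCluster (triLattice N) ω := by
  classical
  rcases Nat.eq_zero_or_pos n with hn0 | hn
  · omega
  obtain ⟨m, f, hocc, hadj, h0, hlast⟩ := h
  set E := embBox N n a b ha hb with hE
  -- adjacency preserved
  have hEadj : ∀ {s t : Fin n × Fin n}, (triLattice n).Adj s t → (triLattice N).Adj (E s) (E t) := by
    intro s t hst
    simp only [triLattice, Set.mem_insert_iff, Set.mem_singleton_iff, Prod.mk.injEq,
      hE, embBox] at hst ⊢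
    push_cast
    push_cast at hst
    omega
  have hadjN : ∀ k : Fin m, (occGraph (triLattice N) ω).Adj (E (f k.castSucc)) (E (f k.succ)) :=
    fun k => show (triLattice N).Adj _ _ ∧ _ ∧ _ from ⟨hEadj (hadj k), hocc k.castSucc, hocc k.succ⟩
  have hreach : ∀ k, (occGraph (triLattice N) ω).Reachable (E (f 0)) (E (f k)) := by
    intro k
    induction k using Fin.induction with
    | zero => exact SimpleGraph.Reachable.refl _
    | succ i ih => exact ih.trans (hadjN i).reachable
  set S := cluster (triLattice N) ω (E (f 0)) with hS
  have hmem : ∀ k, E (f k) ∈ S := fun k => ⟨hocc 0, hocc k, hreach k⟩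
  -- all columns attained
  have hcols : ∀ v : ℕ, v < n → ∃ k, ((f k).1 : ℕ) = v := by
    intro v hv
    exact discrete_ivt (fun k => ((f k).1 : ℕ)) (fun k => adj_fst (hadj k)) h0 hlast hv
  -- the injective column map
  have hTsub : (fun v : Fin n => (⟨a + v, by have := v.isLt; omega⟩ : Fin N)) '' Set.univ
      ⊆ Prod.fst '' S := by
    rintro x ⟨v, -, rfl⟩
    obtain ⟨k, hk⟩ := hcols v v.isLt
    refine ⟨E (f k), hmem k, ?_⟩
    apply Fin.ext
    simp [hE, embBox, hk]
  have hinj : Function.Injective (fun v : Fin n => (⟨a + v, by have := v.isLt; omega⟩ : Fin N)) := by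
    intro u v huv
    apply Fin.ext
    have h' := congrArg Fin.val huv
    simp only [] at h'
    omega
  have h1 : n ≤ S.ncard := by
    have e1 : ((fun v : Fin n => (⟨a + v, by have := v.isLt; omega⟩ : Fin N)) '' Set.univ).ncard = n := by
      rw [Set.ncard_image_of_injective _ hinj, Set.ncard_univ, Nat.card_eq_fintype_card,
        Fintype.card_fin]
    calc n = _ := e1.symm
      _ ≤ (Prod.fst '' S).ncard := Set.ncard_le_ncard hTsub (Set.toFinite _)
      _ ≤ S.ncard := Set.ncard_image_le (Set.toFinite _)
  calc n ≤ S.ncard := h1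
    _ ≤ maxCluster (triLattice N) ω := by
        unfold maxCluster
        exact Finset.le_sup (f := fun s => (cluster (triLattice N) ω s).ncard) (Finset.mem_univ (E (f 0)))

/-- **Type II error consistency of the maximum cluster test (Theorem 3 (ii)).**
Fix `p_B ∈ (1/2, 1]` and `K₀ > 0`, and suppose there is `D > 0` such that for every
`n ≥ 1`, Bernoulli site percolation with parameter `p_B` on `T^(n)` contains a
left-right crossing with probability at least `1 − n·exp(−D·n)`. For each `N ≥ 2`
let `π_N : V_N → [0,1]` be site probabilities on `T^(N)` and suppose there is a
square sub-box `Q_N ⊆ V_N`, a translate of `{0,…,ρ(N)−1} × {0,…,ρ(N)−1}`, with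
`π_N ≡ p_B` on `Q_N`, where `ρ(N) ≥ K₀·log N`. Then
`μ_{π_N}(T ≥ K₀·log N) → 1` as `N → ∞`, i.e. the type II error
`β(N)` of the maximum cluster test tends to `0`. -/
theorem type_two_error_tendsto_zero
    (pB : ℝ) (hpB : 1/2 < pB) (hpB1 : pB ≤ 1)
    (K₀ : ℝ) (hK₀ : 0 < K₀)
    (D : ℝ) (hD : 0 < D)
    (hcross : ∀ n : ℕ, 1 ≤ n →
      ENNReal.ofReal (1 - n * Real.exp (-(D * n))) ≤
        sitePerc (fun _ : Fin n × Fin n => pB) {ω | HasLeftRightCrossing n ω})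
    (π : (N : ℕ) → Fin N × Fin N → ℝ)
    (hπ0 : ∀ N s, 0 ≤ π N s) (hπ1 : ∀ N s, π N s ≤ 1)
    (ρ : ℕ → ℕ)
    (hρ : ∀ N : ℕ, 2 ≤ N → K₀ * Real.log N ≤ (ρ N : ℝ))
    (hQ : ∀ N : ℕ, 2 ≤ N → ∃ a b : ℕ, a + ρ N ≤ N ∧ b + ρ N ≤ N ∧
      ∀ s : Fin N × Fin N, a ≤ (s.1 : ℕ) → (s.1 : ℕ) < a + ρ N →
        b ≤ (s.2 : ℕ) → (s.2 : ℕ) < b + ρ N → π N s = pB) :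
    Filter.Tendsto (fun N : ℕ =>
        (sitePerc (π N)
          {ω | K₀ * Real.log N ≤ (maxCluster (triLattice N) ω : ℝ)}).toReal)
      Filter.atTop (nhds 1) := by
  classical
  have key : ∀ N : ℕ, 2 ≤ N →
      ENNReal.ofReal (1 - (ρ N : ℝ) * Real.exp (-(D * (ρ N : ℝ)))) ≤
        sitePerc (π N) {ω | K₀ * Real.log N ≤ (maxCluster (triLattice N) ω : ℝ)} := by
    intro N hN
    obtain ⟨a, b, ha, hb, hbox⟩ := hQ N hN
    have hlogN : 0 < Real.log N := Real.log_pos (by exact_mod_cast hN)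
    have hρRpos : (0 : ℝ) < (ρ N : ℝ) := lt_of_lt_of_le (mul_pos hK₀ hlogN) (hρ N hN)
    have hn1 : 1 ≤ ρ N := by
      have : 0 < ρ N := by exact_mod_cast hρRpos
      omega
    have hπE : ∀ j : Fin (ρ N) × Fin (ρ N), π N (embBox N (ρ N) a b ha hb j) = pB := by
      intro j
      have h1 := j.1.isLt
      have h2 := j.2.isLt
      exact hbox _ (by simp [embBox]) (by simp [embBox])
        (by simp [embBox]) (by simp [embBox])
    have hmap := map_embBox N (ρ N) a b ha hb (π N) pB hπE
    have hmeasf : Measurable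
        (fun (ω : Fin N × Fin N → Bool) (j : Fin (ρ N) × Fin (ρ N)) => ω (embBox N (ρ N) a b ha hb j)) :=
      measurable_pi_lambda _ fun j => measurable_pi_apply _
    have hcrossmeas :
        MeasurableSet {σ : Fin (ρ N) × Fin (ρ N) → Bool | HasLeftRightCrossing (ρ N) σ} :=
      (Set.toFinite _).measurableSet
    have hsub : (fun (ω : Fin N × Fin N → Bool) (j : Fin (ρ N) × Fin (ρ N)) => ω (embBox N (ρ N) a b ha hb j)) ⁻¹'
          {σ | HasLeftRightCrossing (ρ N) σ} ⊆
        {ω | K₀ * Real.log N ≤ (maxCluster (triLattice N) ω : ℝ)} := by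
      intro ω hω
      have hcl := cluster_of_crossing N (ρ N) a b ha hb ω hω
      have : ((ρ N : ℕ) : ℝ) ≤ (maxCluster (triLattice N) ω : ℝ) := by exact_mod_cast hcl
      exact le_trans (hρ N hN) this
    calc ENNReal.ofReal (1 - (ρ N : ℝ) * Real.exp (-(D * (ρ N : ℝ))))
        ≤ sitePerc (fun _ : Fin (ρ N) × Fin (ρ N) => pB)
            {σ | HasLeftRightCrossing (ρ N) σ} := hcross (ρ N) hn1
      _ = sitePerc (π N) ((fun (ω : Fin N × Fin N → Bool) (j : Fin (ρ N) × Fin (ρ N)) =>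
            ω (embBox N (ρ N) a b ha hb j)) ⁻¹' {σ | HasLeftRightCrossing (ρ N) σ}) := by
          rw [← hmap, Measure.map_apply hmeasf hcrossmeas]
      _ ≤ sitePerc (π N) {ω | K₀ * Real.log N ≤ (maxCluster (triLattice N) ω : ℝ)} :=
          measure_mono hsub
  -- `ρ N → ∞`
  have hrho : Filter.Tendsto (fun N : ℕ => (ρ N : ℝ)) Filter.atTop Filter.atTop := by
    have hev : (fun N : ℕ => K₀ * Real.log N) ≤ᶠ[Filter.atTop] fun N : ℕ => (ρ N : ℝ) := by
      filter_upwards [Filter.eventually_ge_atTop 2] with N hN using hρ N hN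
    exact Filter.tendsto_atTop_mono' _ hev
      ((Real.tendsto_log_atTop.comp tendsto_natCast_atTop_atTop).const_mul_atTop hK₀)
  have base : Filter.Tendsto (fun y : ℝ => y * Real.exp (-y)) Filter.atTop (nhds 0) := by
    simpa using Real.tendsto_pow_mul_exp_neg_atTop_nhds_zero 1
  have hDx : Filter.Tendsto (fun N : ℕ => D * (ρ N : ℝ)) Filter.atTop Filter.atTop :=
    hrho.const_mul_atTop hD
  have h0 : Filter.Tendsto (fun N : ℕ => (ρ N : ℝ) * Real.exp (-(D * (ρ N : ℝ))))
      Filter.atTop (nhds 0) := by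
    have h1 := (base.comp hDx).const_mul (1/D)
    have heq : (fun N : ℕ => (ρ N : ℝ) * Real.exp (-(D * (ρ N : ℝ)))) =
        fun N : ℕ => (1/D) * ((fun y : ℝ => y * Real.exp (-y)) (D * (ρ N : ℝ))) := by
      funext N
      have hD' : D ≠ 0 := ne_of_gt hD
      field_simp
    rw [heq]
    simpa using h1
  have glow : Filter.Tendsto (fun N : ℕ => 1 - (ρ N : ℝ) * Real.exp (-(D * (ρ N : ℝ))))
      Filter.atTop (nhds 1) := by
    have := (tendsto_const_nhds (x := (1:ℝ)) (f := Filter.atTop (α := ℕ))).sub h0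
    simpa using this
  apply tendsto_of_tendsto_of_tendsto_of_le_of_le' glow tendsto_const_nhds
  · filter_upwards [Filter.eventually_ge_atTop 2] with N hN
    have hk := key N hN
    by_cases hpos : 0 ≤ 1 - (ρ N : ℝ) * Real.exp (-(D * (ρ N : ℝ)))
    · calc 1 - (ρ N : ℝ) * Real.exp (-(D * (ρ N : ℝ)))
          = (ENNReal.ofReal (1 - (ρ N : ℝ) * Real.exp (-(D * (ρ N : ℝ))))).toReal :=
            (ENNReal.toReal_ofReal hpos).symm
        _ ≤ _ := ENNReal.toReal_mono (measure_ne_top _ _) hk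
    · exact le_trans (le_of_not_ge hpos) ENNReal.toReal_nonneg
  · filter_upwards with N
    calc (sitePerc (π N)
          {ω | K₀ * Real.log N ≤ (maxCluster (triLattice N) ω : ℝ)}).toReal
        ≤ (1 : ENNReal).toReal := ENNReal.toReal_mono ENNReal.one_ne_top prob_le_one
      _ = 1 := by simp
end

section
/- Fix p ∈ [0,1], λ > 0 and C > 0 with C·λ > 1, and set φ(N) = 2C·log N. Suppose that for every N ≥ 1, every site s of the finite triangular lattice T^(N), and every n ≥ 1, Bernoulli site percolation μ_{p,N} with parameter p on T^(N) satisfies μ_{p,N}({ω : |C(s,ω)| ≥ n}) ≤ exp(−λ·n). Then there exist C₂ > 0 and N₀ such that for all N ≥ N₀, the type I error α(N) = μ_{p,N}({ω : T(ω) ≥ φ(N)}) satisfies α(N) ≤ exp(−C₂·φ(N)). -/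
open MeasureTheory

/-- **Exponential rate for the type I error (Theorem 10 (1)).**
Fix `p ∈ [0,1]`, `λ > 0`, `C > 0` with `C·λ > 1`, and set `φ(N) = 2C·log N`. If for
every `N ≥ 1`, every site `s` of `T^(N)` and every `n ≥ 1`, Bernoulli site
percolation with parameter `p` on `T^(N)` satisfies `μ(|C(s)| ≥ n) ≤ exp(−λ n)`,
then there are `C₂ > 0` and `N₀` such that for all `N ≥ N₀`, the type I error
`α(N) = μ_{p,N}(T ≥ φ(N))` satisfies `α(N) ≤ exp(−C₂·φ(N))`. -/
theorem type_one_error_exponential_rate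
    (p : ℝ) (hp0 : 0 ≤ p) (hp1 : p ≤ 1)
    (lam C : ℝ) (hlam : 0 < lam) (hC : 0 < C) (hClam : 1 < C * lam)
    (φ : ℕ → ℝ) (hφ : ∀ N : ℕ, φ N = 2 * C * Real.log N)
    (htail : ∀ N : ℕ, 1 ≤ N → ∀ s : Fin N × Fin N, ∀ n : ℕ, 1 ≤ n →
      sitePerc (fun _ : Fin N × Fin N => p)
          {ω | n ≤ (cluster (triLattice N) ω s).ncard} ≤
        ENNReal.ofReal (Real.exp (-(lam * n)))) :
    ∃ C₂ : ℝ, 0 < C₂ ∧ ∃ N₀ : ℕ, ∀ N : ℕ, N₀ ≤ N →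
      sitePerc (fun _ : Fin N × Fin N => p)
          {ω | φ N ≤ (maxCluster (triLattice N) ω : ℝ)} ≤
        ENNReal.ofReal (Real.exp (-(C₂ * φ N))) := by
  refine ⟨lam - 1 / C, by rw [sub_pos, div_lt_iff₀ hC] ; linarith, 2, fun N hN => ?_⟩
  have hN1 : 1 ≤ N := le_trans one_le_two hN
  have hNR : (2 : ℝ) ≤ N := by exact_mod_cast hN
  have hlogN : 0 < Real.log N := Real.log_pos (by linarith)
  have hφpos : 0 < φ N := by rw [hφ]; positivity
  set n : ℕ := ⌈φ N⌉₊ with hn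
  have hn1 : 1 ≤ n := Nat.one_le_iff_ne_zero.2 (by
    simp only [hn, ne_eq, Nat.ceil_eq_zero, not_le]; exact hφpos)
  have hφn : φ N ≤ (n : ℝ) := Nat.le_ceil _
  -- event inclusion
  have hsub : {ω : Fin N × Fin N → Bool | φ N ≤ (maxCluster (triLattice N) ω : ℝ)} ⊆
      ⋃ s : Fin N × Fin N, {ω | n ≤ (cluster (triLattice N) ω s).ncard} := by
    intro ω hω
    have h1 : n ≤ maxCluster (triLattice N) ω := Nat.ceil_le.2 hω
    have h2 : (0 : ℕ) < n := hn1
    rw [maxCluster, Finset.le_sup_iff h2] at h1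
    obtain ⟨s, _, hs⟩ := h1
    exact Set.mem_iUnion.2 ⟨s, hs⟩
  calc sitePerc (fun _ : Fin N × Fin N => p)
        {ω | φ N ≤ (maxCluster (triLattice N) ω : ℝ)}
      ≤ sitePerc (fun _ : Fin N × Fin N => p)
        (⋃ s : Fin N × Fin N, {ω | n ≤ (cluster (triLattice N) ω s).ncard}) :=
        measure_mono hsub
    _ ≤ ∑' s : Fin N × Fin N, sitePerc (fun _ : Fin N × Fin N => p)
        {ω | n ≤ (cluster (triLattice N) ω s).ncard} := measure_iUnion_le _
    _ ≤ ∑' _ : Fin N × Fin N, ENNReal.ofReal (Real.exp (-(lam * n))) :=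
        ENNReal.tsum_le_tsum fun s => htail N hN1 s n hn1
    _ = (Fintype.card (Fin N × Fin N)) * ENNReal.ofReal (Real.exp (-(lam * n))) := by
        rw [tsum_fintype, Finset.sum_const, Finset.card_univ, nsmul_eq_mul]
    _ ≤ ENNReal.ofReal (Real.exp (-((lam - 1 / C) * φ N))) := by
        rw [Fintype.card_prod, Fintype.card_fin, ← ENNReal.ofReal_natCast,
          ← ENNReal.ofReal_mul (by positivity)]
        apply ENNReal.ofReal_le_ofReal
        have hcard : ((N * N : ℕ) : ℝ) = Real.exp (2 * Real.log N) := by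
          push_cast
          rw [two_mul, Real.exp_add, Real.exp_log (by positivity)]
        rw [hcard, ← Real.exp_add]
        apply Real.exp_le_exp.2
        have h2log : 2 * Real.log N = φ N / C := by
          rw [hφ]; field_simp
        have hlamn : lam * φ N ≤ lam * n := by
          apply mul_le_mul_of_nonneg_left hφn hlam.le
        rw [h2log]
        have : (lam - 1 / C) * φ N = lam * φ N - φ N / C := by
          field_simp
        rw [this]
        linarith
end
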